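/- arXiv:math/0511470 — 2 statements merged into one kernel-verified Lean document; each statement's English description precedes it below -/
import Mathlib

section
/- Suppose F_{n⃗} is an |n⃗|-dimensional subspace of L²(ℝ), |n⃗| = |m⃗| + 1, and fix k ∈ {1,…,q}. Then every nonzero linear form Q ∈ F_{n⃗} ∩ G_{m⃗}⊥ satisfies ∫ Q(x) x^{mₖ} w₂ₖ(x) dx ≠ 0 if and only if F_{n⃗} ∩ G_{m⃗+e⃗ₖ}⊥ = {0}. -/
open MeasureTheory Polynomial

/-- The space F_{n⃗}: the span in functions on ℝ of xʲ·w₁ₗ(x), 0 ≤ j ≤ nₗ−1. -/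
noncomputable def mixedF {p : ℕ} (w1 : Fin p → ℝ → ℝ) (n : Fin p → ℕ) :
    Submodule ℝ (ℝ → ℝ) :=
  Submodule.span ℝ {f | ∃ l : Fin p, ∃ j : ℕ, j < n l ∧ f = fun x => x ^ j * w1 l x}

/-- The "orthogonal complement of G_{m⃗}": functions Q such that Q·xʲ·w₂ₖ is
integrable with vanishing integral for 0 ≤ j ≤ mₖ−1, k = 1,…,q. -/
noncomputable def mixedGperp {q : ℕ} (w2 : Fin q → ℝ → ℝ) (m : Fin q → ℕ) :
    Submodule ℝ (ℝ → ℝ) where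
  carrier := {Q | ∀ k : Fin q, ∀ j, j < m k →
    Integrable (fun x => Q x * (x ^ j * w2 k x)) ∧
      (∫ x, Q x * (x ^ j * w2 k x)) = 0}
  zero_mem' := by
    intro k j hj
    constructor
    · simpa using (integrable_zero ℝ ℝ (volume : Measure ℝ))
    · simp
  add_mem' := by
    intro a b ha hb k j hj
    obtain ⟨hai, haz⟩ := ha k j hj
    obtain ⟨hbi, hbz⟩ := hb k j hj
    constructor
    · have h2 : (fun x => (a + b) x * (x ^ j * w2 k x)) =
        fun x => a x * (x ^ j * w2 k x) + b x * (x ^ j * w2 k x) := by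
        funext x; simp [add_mul]
      rw [h2]; exact hai.add hbi
    · have h : (fun x => (a + b) x * (x ^ j * w2 k x)) =
        fun x => a x * (x ^ j * w2 k x) + b x * (x ^ j * w2 k x) := by
        funext x; simp [add_mul]
      rw [h, integral_add hai hbi, haz, hbz, add_zero]
  smul_mem' := by
    intro c a ha k j hj
    obtain ⟨hai, haz⟩ := ha k j hj
    have h : (fun x => (c • a) x * (x ^ j * w2 k x)) =
        fun x => c * (a x * (x ^ j * w2 k x)) := by
      funext x; simp [mul_assoc]
    constructor
    · rw [h]; exact hai.const_mul c
    · rw [h, integral_const_mul, haz, mul_zero]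

/-- Q is a linear form of multiple orthogonal polynomials of mixed type for the
pair (n⃗, m⃗). -/
noncomputable def IsMixedForm {p q : ℕ} (w1 : Fin p → ℝ → ℝ) (w2 : Fin q → ℝ → ℝ)
    (n : Fin p → ℕ) (m : Fin q → ℕ) (Q : ℝ → ℝ) : Prop :=
  (∃ A : Fin p → Polynomial ℝ, (∀ i, (A i).degree < (n i : ℕ)) ∧
     Q = fun x => ∑ i, (A i).eval x * w1 i x) ∧
  ∀ k : Fin q, ∀ j, j < m k → (∫ x, Q x * (x ^ j * w2 k x)) = 0

lemma span_integrable {p : ℕ} (w1 : Fin p → ℝ → ℝ) (n : Fin p → ℕ) (g : ℝ → ℝ)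
    (h : ∀ l j, j < n l → Integrable (fun x : ℝ => (x ^ j * w1 l x) * g x))
    {Q : ℝ → ℝ} (hQ : Q ∈ mixedF w1 n) :
    Integrable (fun x : ℝ => Q x * g x) := by
  induction hQ using Submodule.span_induction with
  | mem f hf =>
    obtain ⟨l, j, hj, rfl⟩ := hf
    exact h l j hj
  | zero => simpa using (integrable_zero ℝ ℝ (volume : Measure ℝ))
  | add a b _ _ ha hb =>
    have : (fun x => (a + b) x * g x) = fun x => a x * g x + b x * g x := by
      funext x; simp [add_mul]
    rw [this]; exact ha.add hb
  | smul c a _ ha =>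
    have : (fun x => (c • a) x * g x) = fun x => c * (a x * g x) := by
      funext x; simp [mul_assoc]
    rw [this]; exact ha.const_mul c

/-- Lemma 2.2(c): every nonzero linear form Q ∈ F_{n⃗} ∩ G_{m⃗}⊥ satisfies
∫ Q(x) x^{mₖ} w₂ₖ(x) dx ≠ 0 iff F_{n⃗} ∩ G_{m⃗+e⃗ₖ}⊥ = {0}. -/
theorem stmt10 (p q : ℕ) (w1 : Fin p → ℝ → ℝ) (w2 : Fin q → ℝ → ℝ)
    (n : Fin p → ℕ) (m : Fin q → ℕ) (k : Fin q)
    (hInt : ∀ (l : Fin p) (j : ℕ), j < n l → ∀ (k' : Fin q) (i : ℕ),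
      i < Function.update m k (m k + 1) k' →
      Integrable (fun x : ℝ => (x ^ j * w1 l x) * (x ^ i * w2 k' x)))
    (hdim : Module.finrank ℝ (mixedF w1 n) = ∑ i, n i)
    (hnm : ∑ i, n i = ∑ k', m k' + 1) :
    (∀ Q ∈ mixedF w1 n ⊓ mixedGperp w2 m, Q ≠ 0 →
      (∫ x, Q x * (x ^ (m k) * w2 k x)) ≠ 0) ↔
    mixedF w1 n ⊓ mixedGperp w2 (Function.update m k (m k + 1)) = ⊥ := by
  constructor
  · intro hQ
    rw [Submodule.eq_bot_iff]
    rintro Q ⟨hQF, hQG'⟩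
    by_contra hne
    have hQG : Q ∈ mixedGperp w2 m := by
      intro k' j hj
      refine hQG' k' j ?_
      rcases eq_or_ne k' k with rfl | hk
      · rw [Function.update_self]; omega
      · rwa [Function.update_of_ne hk]
    have h0 : (∫ x, Q x * (x ^ (m k) * w2 k x)) = 0 :=
      (hQG' k (m k) (by rw [Function.update_self]; omega)).2
    exact hQ Q ⟨hQF, hQG⟩ hne h0
  · intro hbot Q hQ hne h0
    obtain ⟨hQF, hQG⟩ := hQ
    have hQG' : Q ∈ mixedGperp w2 (Function.update m k (m k + 1)) := by
      intro k' j hj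
      rcases eq_or_ne k' k with rfl | hk
      · rw [Function.update_self] at hj
        rcases Nat.lt_succ_iff_lt_or_eq.mp hj with h | rfl
        · exact hQG k' j h
        · refine ⟨?_, h0⟩
          exact span_integrable w1 n _ (fun l i hi =>
            hInt l i hi k' (m k') (by rw [Function.update_self]; omega)) hQF
      · rw [Function.update_of_ne hk] at hj
        exact hQG k' j hj
    have : Q ∈ mixedF w1 n ⊓ mixedGperp w2 (Function.update m k (m k + 1)) :=
      ⟨hQF, hQG'⟩
    rw [hbot] at this
    exact hne this
end

section
/- For distinct real numbers β₁,…,β_p and positive integers n₁,…,n_p with n = n₁+⋯+n_p, the functions e^{β₁x}, xe^{β₁x}, …, x^{n₁−1}e^{β₁x}, …, e^{β_px}, …, x^{n_p−1}e^{β_px} are linearly independent over ℝ, and moreover any nonzero linear combination of them has at most n − 1 real zeros (counting without multiplicity). -/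
open Polynomial Set

/-- interval separation lemma -/
lemma interval_card {S T : Set ℝ} (hT : T.Finite)
    (h : ∀ x ∈ S, ∀ y ∈ S, x < y → ∃ z ∈ T, x < z ∧ z < y) :
    S.Finite ∧ S.ncard ≤ T.ncard + 1 := by
  rcases T.eq_empty_or_nonempty with hTe | hTne
  · subst hTe
    have hsub : S.Subsingleton := by
      intro x hx y hy
      by_contra hxy
      rcases lt_or_gt_of_ne hxy with hlt | hlt
      · obtain ⟨z, hz, -⟩ := h x hx y hy hlt; exact hz
      · obtain ⟨z, hz, -⟩ := h y hy x hx hlt; exact hz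
    refine ⟨hsub.finite, ?_⟩
    rcases hsub.eq_empty_or_singleton with h1 | ⟨a, h1⟩ <;> subst h1 <;> simp
  · obtain ⟨b, hb⟩ := hT.bddAbove
    set c : ℝ := b + 1 with hc
    have hcT : ∀ t ∈ T, t < c := fun t ht => lt_of_le_of_lt (hb ht) (by simp [hc])
    classical
    set φ : ℝ → ℝ := fun x => if hne : (T ∩ Set.Ioi x).Nonempty then sInf (T ∩ Set.Ioi x) else c with hφ
    have hmem : ∀ x, (T ∩ Set.Ioi x).Nonempty → sInf (T ∩ Set.Ioi x) ∈ T ∩ Set.Ioi x := by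
      intro x hne
      exact Set.Nonempty.csInf_mem hne (hT.inter_of_left _)
    have hφmem : ∀ x, φ x ∈ insert c T := by
      intro x
      by_cases hne : (T ∩ Set.Ioi x).Nonempty
      · simp only [hφ, dif_pos hne]
        exact Set.mem_insert_of_mem _ (hmem x hne).1
      · simp only [hφ]
        rw [dif_neg hne]
        exact Set.mem_insert _ _
    have hinj : Set.InjOn φ S := by
      have key : ∀ x ∈ S, ∀ y ∈ S, x < y → φ x ≠ φ y := by
        intro x hx y hy hxy
        obtain ⟨z, hzT, hxz, hzy⟩ := h x hx y hy hxy
        have hne : (T ∩ Set.Ioi x).Nonempty := ⟨z, hzT, hxz⟩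
        have h1 : φ x ≤ z := by
          simp only [hφ, dif_pos hne]
          exact csInf_le (hT.inter_of_left _).bddBelow ⟨hzT, hxz⟩
        have hφxT : φ x ∈ T := by
          simp only [hφ, dif_pos hne]; exact (hmem x hne).1
        by_cases hne' : (T ∩ Set.Ioi y).Nonempty
        · have h2 : y < φ y := by
            simp only [hφ, dif_pos hne']
            exact (hmem y hne').2
          exact ne_of_lt (lt_of_le_of_lt h1 (lt_trans hzy h2))
        · have : φ y = c := by simp only [hφ]; rw [dif_neg hne']
          rw [this]
          exact ne_of_lt (hcT _ hφxT)
      intro x hx y hy hxy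
      by_contra hne
      rcases lt_or_gt_of_ne hne with hlt | hlt
      · exact key x hx y hy hlt hxy
      · exact key y hy x hx hlt hxy.symm
    have himg : φ '' S ⊆ insert c T := by
      rintro _ ⟨x, -, rfl⟩; exact hφmem x
    have hfin' : (φ '' S).Finite := (hT.insert c).subset himg
    have hSfin : S.Finite := hfin'.of_finite_image hinj
    refine ⟨hSfin, ?_⟩
    calc S.ncard = (φ '' S).ncard := (Set.ncard_image_of_injOn hinj).symm
      _ ≤ (insert c T).ncard := Set.ncard_le_ncard himg (hT.insert c)
      _ ≤ T.ncard + 1 := Set.ncard_insert_le _ _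

noncomputable def expPoly (p : ℕ) (β : Fin p → ℝ) (P : Fin p → Polynomial ℝ) : ℝ → ℝ :=
  fun x => ∑ l, (P l).eval x * Real.exp (β l * x)

noncomputable def muP (Q : Polynomial ℝ) : ℕ := if Q = 0 then 0 else Q.natDegree + 1

lemma hasDerivAt_expPoly (p : ℕ) (β : Fin p → ℝ) (P : Fin p → Polynomial ℝ) (x : ℝ) :
    HasDerivAt (expPoly p β P)
      (expPoly p β (fun l => derivative (P l) + C (β l) * P l) x) x := by
  unfold expPoly
  apply HasDerivAt.fun_sum
  intro l _
  have h1 : HasDerivAt (fun x : ℝ => Real.exp (β l * x)) (β l * Real.exp (β l * x)) x := by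
    have := (Real.hasDerivAt_exp (β l * x)).comp x ((hasDerivAt_id x).const_mul (β l))
    simpa [Function.comp_def, mul_comm] using this
  have h2 : HasDerivAt (fun x : ℝ => (P l).eval x) ((derivative (P l)).eval x) x :=
    (P l).hasDerivAt x
  have := h2.fun_mul h1
  refine this.congr_deriv ?_
  simp [Polynomial.eval_add, Polynomial.eval_mul]
  ring

lemma expPoly_zeros (N : ℕ) : ∀ (p : ℕ) (β : Fin p → ℝ), Function.Injective β →
    ∀ P : Fin p → Polynomial ℝ, (∑ l, muP (P l)) ≤ N → (∃ l, P l ≠ 0) →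
    {x : ℝ | expPoly p β P x = 0}.Finite ∧
    {x : ℝ | expPoly p β P x = 0}.ncard ≤ (∑ l, muP (P l)) - 1 := by
  induction N using Nat.strong_induction_on with
  | _ N IH =>
  rintro p β hβ P hle ⟨l₀, hl₀⟩
  classical
  set β' := fun l => β l - β l₀ with hβ'
  have hβ'i : Function.Injective β' := by
    intro a b hab; apply hβ; simp only [hβ'] at hab; linarith
  have hβ'l₀ : β' l₀ = 0 := by simp [hβ']
  have hsame : {x : ℝ | expPoly p β P x = 0} = {x : ℝ | expPoly p β' P x = 0} := by
    ext x
    simp only [Set.mem_setOf_eq]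
    have hfac : expPoly p β P x = Real.exp (β l₀ * x) * expPoly p β' P x := by
      unfold expPoly
      rw [Finset.mul_sum]
      refine Finset.sum_congr rfl fun l _ => ?_
      have h : β l * x = β l₀ * x + (β l - β l₀) * x := by ring
      rw [h, Real.exp_add]
      simp only [hβ']
      ring
    rw [hfac]
    constructor
    · intro h
      rcases mul_eq_zero.mp h with h | h
      · exact absurd h (Real.exp_ne_zero _)
      · exact h
    · intro h; rw [h, mul_zero]
  set Q := fun l => derivative (P l) + C (β' l) * P l with hQdef
  have hQzero : ∀ l, P l = 0 → Q l = 0 := by intro l h; simp [hQdef, h]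
  have hQne : ∀ l, l ≠ l₀ → P l ≠ 0 → (Q l).degree = (P l).degree := by
    intro l hne hP
    have hc : β' l ≠ 0 := by
      intro h; exact hne (hβ'i (h.trans hβ'l₀.symm))
    have h1 : (C (β' l) * P l).degree = (P l).degree := Polynomial.degree_C_mul hc
    have h2 : (derivative (P l)).degree < (C (β' l) * P l).degree := by
      rw [h1]; exact Polynomial.degree_derivative_lt hP
    calc (Q l).degree = (C (β' l) * P l).degree :=
          Polynomial.degree_add_eq_right_of_degree_lt h2
      _ = (P l).degree := h1
  have hmuQ : ∀ l, l ≠ l₀ → muP (Q l) = muP (P l) := by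
    intro l hne
    by_cases hP : P l = 0
    · rw [hQzero l hP, hP]
    · have hdeg := hQne l hne hP
      have hQn : Q l ≠ 0 := by
        intro h
        rw [h, Polynomial.degree_zero] at hdeg
        exact hP (Polynomial.degree_eq_bot.mp hdeg.symm)
      simp [muP, hP, hQn, Polynomial.natDegree_eq_of_degree_eq hdeg]
  have hmul₀ : muP (Q l₀) + 1 ≤ muP (P l₀) := by
    have hQl₀ : Q l₀ = derivative (P l₀) := by simp [hQdef, hβ'l₀]
    by_cases hd : (P l₀).natDegree = 0
    · have hder : derivative (P l₀) = 0 := by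
        obtain ⟨a, ha⟩ := Polynomial.natDegree_eq_zero.mp hd
        rw [← ha]; simp
      simp [muP, hQl₀, hder, hl₀]
    · have hlt := Polynomial.natDegree_derivative_lt hd
      rw [hQl₀]
      by_cases h0 : derivative (P l₀) = 0
      · simp [muP, h0, hl₀]
      · simp only [muP, if_neg h0, if_neg hl₀]
        omega
  have hsum : ∑ l, muP (Q l) + 1 ≤ ∑ l, muP (P l) := by
    rw [← Finset.sum_erase_add Finset.univ _ (Finset.mem_univ l₀),
        ← Finset.sum_erase_add Finset.univ (fun l => muP (P l)) (Finset.mem_univ l₀)]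
    have heq : ∑ l ∈ Finset.univ.erase l₀, muP (Q l)
        = ∑ l ∈ Finset.univ.erase l₀, muP (P l) :=
      Finset.sum_congr rfl fun l hl => hmuQ l (Finset.ne_of_mem_erase hl)
    omega
  by_cases hQ0 : ∃ l, Q l ≠ 0
  · have hQle : ∑ l, muP (Q l) < N := by omega
    obtain ⟨hTfin, hTcard⟩ := IH (∑ l, muP (Q l)) hQle p β' hβ'i Q (le_refl _) hQ0
    have hdiff : Differentiable ℝ (expPoly p β' P) :=
      fun x => (hasDerivAt_expPoly p β' P x).differentiableAt
    have hderiv : ∀ x, deriv (expPoly p β' P) x = expPoly p β' Q x :=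
      fun x => (hasDerivAt_expPoly p β' P x).deriv
    have hrolle : ∀ x ∈ {x : ℝ | expPoly p β' P x = 0},
        ∀ y ∈ {x : ℝ | expPoly p β' P x = 0}, x < y →
        ∃ z ∈ {x : ℝ | expPoly p β' Q x = 0}, x < z ∧ z < y := by
      intro x hx y hy hxy
      obtain ⟨z, hz, hz0⟩ := exists_deriv_eq_zero hxy
        (hdiff.continuous.continuousOn) (hx.trans hy.symm)
      exact ⟨z, by rw [Set.mem_setOf_eq, ← hderiv z]; exact hz0, hz.1, hz.2⟩
    obtain ⟨hSfin, hScard⟩ := interval_card hTfin hrolle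
    rw [hsame]
    refine ⟨hSfin, ?_⟩
    have h1 : 1 ≤ ∑ l, muP (Q l) := by
      obtain ⟨l, hl⟩ := hQ0
      calc 1 ≤ muP (Q l) := by simp [muP, hl]
        _ ≤ ∑ l, muP (Q l) :=
            Finset.single_le_sum (f := fun l => muP (Q l))
              (fun i _ => Nat.zero_le _) (Finset.mem_univ l)
    omega
  · push_neg at hQ0
    have hPl : ∀ l, l ≠ l₀ → P l = 0 := by
      intro l hl
      by_contra hP
      have hd := hQne l hl hP
      rw [hQ0 l, Polynomial.degree_zero] at hd
      exact hP (Polynomial.degree_eq_bot.mp hd.symm)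
    have hder : derivative (P l₀) = 0 := by
      have := hQ0 l₀
      simpa [hQdef, hβ'l₀] using this
    have hdeg : (P l₀).natDegree = 0 :=
      Polynomial.natDegree_eq_zero_of_derivative_eq_zero hder
    obtain ⟨a, ha⟩ := Polynomial.natDegree_eq_zero.mp hdeg
    have ha0 : a ≠ 0 := by intro h; apply hl₀; rw [← ha, h]; simp
    have hempty : {x : ℝ | expPoly p β P x = 0} = ∅ := by
      ext x
      simp only [Set.mem_setOf_eq, Set.mem_empty_iff_false, iff_false]
      intro hx
      unfold expPoly at hx
      rw [Finset.sum_eq_single l₀] at hx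
      · rw [← ha] at hx
        simp only [Polynomial.eval_C] at hx
        rcases mul_eq_zero.mp hx with h | h
        · exact ha0 h
        · exact Real.exp_ne_zero _ h
      · intro l _ hl; rw [hPl l hl]; simp
      · intro h; exact absurd (Finset.mem_univ l₀) h
    rw [hempty]
    simp

lemma part2aux (p : ℕ) (β : Fin p → ℝ) (hβ : Function.Injective β)
    (n : Fin p → ℕ) (hn : ∀ l, 1 ≤ n l) (c : Fin p → ℕ → ℝ)
    (hc : ¬ ∀ l : Fin p, ∀ j < n l, c l j = 0) :
    {x : ℝ | ∑ l : Fin p, ∑ j ∈ Finset.range (n l),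
        c l j * x ^ j * Real.exp (β l * x) = 0}.Finite ∧
    {x : ℝ | ∑ l : Fin p, ∑ j ∈ Finset.range (n l),
        c l j * x ^ j * Real.exp (β l * x) = 0}.ncard ≤ (∑ l, n l) - 1 := by
  classical
  set P : Fin p → Polynomial ℝ := fun l => ∑ j ∈ Finset.range (n l), C (c l j) * X ^ j
    with hPdef
  have hval : ∀ x : ℝ, ∑ l : Fin p, ∑ j ∈ Finset.range (n l),
      c l j * x ^ j * Real.exp (β l * x) = expPoly p β P x := by
    intro x
    unfold expPoly
    refine Finset.sum_congr rfl fun l _ => ?_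
    have he : (P l).eval x = ∑ j ∈ Finset.range (n l), c l j * x ^ j := by
      simp [hPdef, Polynomial.eval_finset_sum]
    rw [he, Finset.sum_mul]
  have hset : {x : ℝ | ∑ l : Fin p, ∑ j ∈ Finset.range (n l),
      c l j * x ^ j * Real.exp (β l * x) = 0} = {x : ℝ | expPoly p β P x = 0} := by
    ext x; rw [Set.mem_setOf_eq, Set.mem_setOf_eq, hval x]
  have hcoeff : ∀ l, ∀ j < n l, (P l).coeff j = c l j := by
    intro l j hj
    simp only [hPdef, Polynomial.finset_sum_coeff, Polynomial.coeff_C_mul,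
      Polynomial.coeff_X_pow, mul_ite, mul_one, mul_zero]
    rw [Finset.sum_ite_eq (Finset.range (n l)) j (fun k => c l k)]
    simp [hj]
  push_neg at hc
  obtain ⟨l, j, hj, hcj⟩ := hc
  have hPl : P l ≠ 0 := by
    intro h
    apply hcj
    rw [← hcoeff l j hj, h, Polynomial.coeff_zero]
  have hmu : ∑ l, muP (P l) ≤ ∑ l, n l := by
    refine Finset.sum_le_sum fun l _ => ?_
    by_cases h : P l = 0
    · simp [muP, h]
    · have hdeg : (P l).natDegree ≤ n l - 1 := by
        refine Polynomial.natDegree_sum_le_of_forall_le _ _ fun j hj => ?_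
        calc (C (c l j) * X ^ j).natDegree ≤ (X ^ j : Polynomial ℝ).natDegree :=
              Polynomial.natDegree_C_mul_le _ _
          _ = j := Polynomial.natDegree_X_pow j
          _ ≤ n l - 1 := by
              have := Finset.mem_range.mp hj
              have := hn l
              omega
      have := hn l
      simp only [muP, if_neg h]
      omega
  obtain ⟨hfin, hcard⟩ := expPoly_zeros (∑ l, muP (P l)) p β hβ P (le_refl _) ⟨l, hPl⟩
  rw [hset]
  exact ⟨hfin, le_trans hcard (Nat.sub_le_sub_right hmu 1)⟩

/-- For distinct β₁,…,β_p, the functions xʲe^{βₗx} (0 ≤ j ≤ nₗ−1) are linearly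
independent over ℝ, and any nonzero linear combination has at most
n − 1 = n₁+⋯+n_p − 1 real zeros. -/
theorem stmt14 (p : ℕ) (β : Fin p → ℝ) (hβ : Function.Injective β)
    (n : Fin p → ℕ) (hn : ∀ l, 1 ≤ n l) :
    LinearIndependent ℝ (fun li : (Σ l : Fin p, Fin (n l)) =>
      (fun x : ℝ => x ^ (li.2 : ℕ) * Real.exp (β li.1 * x))) ∧
    ∀ c : Fin p → ℕ → ℝ, (¬ ∀ l : Fin p, ∀ j < n l, c l j = 0) →
      {x : ℝ | ∑ l : Fin p, ∑ j ∈ Finset.range (n l),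
          c l j * x ^ j * Real.exp (β l * x) = 0}.Finite ∧
      {x : ℝ | ∑ l : Fin p, ∑ j ∈ Finset.range (n l),
          c l j * x ^ j * Real.exp (β l * x) = 0}.ncard ≤ (∑ l, n l) - 1 := by
  classical
  refine ⟨?_, fun c hc => part2aux p β hβ n hn c hc⟩
  rw [Fintype.linearIndependent_iff]
  intro g hg
  set c : Fin p → ℕ → ℝ := fun l j => if h : j < n l then g ⟨l, ⟨j, h⟩⟩ else 0 with hcdef
  have huniv : ∀ x : ℝ, ∑ l : Fin p, ∑ j ∈ Finset.range (n l),
      c l j * x ^ j * Real.exp (β l * x) = 0 := by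
    intro x
    have hx := congrFun hg x
    simp only [Finset.sum_apply, Pi.smul_apply, smul_eq_mul, Pi.zero_apply] at hx
    rw [← Finset.univ_sigma_univ, Finset.sum_sigma] at hx
    calc ∑ l : Fin p, ∑ j ∈ Finset.range (n l), c l j * x ^ j * Real.exp (β l * x)
        = ∑ l : Fin p, ∑ j : Fin (n l), g ⟨l, j⟩ * (x ^ (j : ℕ) * Real.exp (β l * x)) := by
          refine Finset.sum_congr rfl fun l _ => ?_
          rw [← Fin.sum_univ_eq_sum_range
            (fun j => c l j * x ^ j * Real.exp (β l * x)) (n l)]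
          refine Finset.sum_congr rfl fun j _ => ?_
          simp only [hcdef, dif_pos j.isLt, Fin.eta]
          ring
      _ = 0 := hx
  have hall : ∀ l : Fin p, ∀ j < n l, c l j = 0 := by
    by_contra hcne
    obtain ⟨hfin, -⟩ := part2aux p β hβ n hn c hcne
    rw [Set.eq_univ_of_forall huniv] at hfin
    exact Set.infinite_univ hfin
  rintro ⟨l, j⟩
  have := hall l j j.isLt
  simpa [hcdef, dif_pos j.isLt, Fin.eta] using this
end
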